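/- Let f_min, μ be real and σ > 0, and set z = (f_min - μ)/σ. Then ∫_{-∞}^{f_min} (f_min - f) · (1/√(2πσ²)) exp(-(f-μ)²/(2σ²)) df = (f_min - μ)·Φ(z) + σ·φ(z) = σ(zΦ(z) + φ(z)), where Φ and φ are the standard normal CDF and PDF. -/

import Mathlib

open Real MeasureTheory Set Filter Topology

noncomputable def stdN : ℝ → ℝ := fun x => (1 / Real.sqrt (2 * π)) * Real.exp (-x ^ 2 / 2)

lemma stdN_integrable : Integrable stdN := by
  have h : Integrable (fun x : ℝ => Real.exp (-(1/2 : ℝ) * x ^ 2)) :=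
    integrable_exp_neg_mul_sq (by norm_num)
  have : (fun x : ℝ => (1 / Real.sqrt (2 * π)) * Real.exp (-(1/2 : ℝ) * x ^ 2)) = stdN := by
    funext x; simp only [stdN]; ring_nf
  rw [← this]; exact h.const_mul _

lemma stdN_hasDerivAt (x : ℝ) : HasDerivAt stdN (-x * stdN x) x := by
  have h1 : HasDerivAt (fun y : ℝ => -y ^ 2 / 2) (-x) x := by
    have := ((hasDerivAt_pow 2 x).neg).div_const 2
    refine this.congr_deriv ?_; push_cast; ring
  have h2 := h1.exp
  have h3 := h2.const_mul (1 / Real.sqrt (2 * π))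
  refine h3.congr_deriv ?_
  simp only [stdN]; ring

lemma stdN_cont : Continuous stdN := by
  exact (continuous_const.mul ((continuous_pow 2).neg.div_const 2 |>.rexp))

lemma stdC_hasDerivAt (x : ℝ) :
    HasDerivAt (fun t => ∫ u in Iic t, stdN u) (stdN x) x := by
  have key : ∀ t : ℝ, (∫ u in Iic t, stdN u) = (∫ u in Iic 0, stdN u) + ∫ u in (0:ℝ)..t, stdN u := by
    intro t
    have := intervalIntegral.integral_Iic_sub_Iic (stdN_integrable.integrableOn (s := Iic (0:ℝ)))
      (stdN_integrable.integrableOn (s := Iic t))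
    linarith [this]
  have h := intervalIntegral.integral_hasDerivAt_right
    (stdN_integrable.intervalIntegrable) (stdN_cont.stronglyMeasurableAtFilter _ _)
    stdN_cont.continuousAt (a := 0) (b := x)
  have h2 := (h.const_add (∫ u in Iic 0, stdN u))
  exact h2.congr_of_eventuallyEq (Filter.Eventually.of_forall fun t => (key t))

lemma stdN_nonneg (x : ℝ) : 0 ≤ stdN x := by
  unfold stdN; positivity

lemma stdN_tendsto_atBot : Tendsto stdN atBot (𝓝 0) := by
  have h1 : Tendsto (fun x : ℝ => -x ^ 2 / 2) atBot atBot := by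
    apply Tendsto.atBot_div_const (by norm_num : (0:ℝ) < 2)
    apply Filter.tendsto_neg_atTop_atBot.comp
    have habs : Tendsto (fun x : ℝ => |x|) atBot atTop := tendsto_abs_atBot_atTop
    have hpow : Tendsto (fun y : ℝ => y ^ 2) atTop atTop :=
      tendsto_pow_atTop (by norm_num)
    have h := hpow.comp habs
    refine h.congr fun x => ?_
    simp [Function.comp, sq_abs]
  have h2 := Real.tendsto_exp_atBot.comp h1
  have h3 := h2.const_mul (1 / Real.sqrt (2 * π))
  rw [mul_zero] at h3
  refine h3.congr fun x => ?_
  simp [stdN, Function.comp]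

lemma stdC_tendsto_atBot : Tendsto (fun t => ∫ u in Iic t, stdN u) atBot (𝓝 0) := by
  have key : ∀ t : ℝ, (∫ u in Iic t, stdN u) = ∫ u, (Iic t).indicator stdN u := by
    intro t; rw [integral_indicator measurableSet_Iic]
  simp_rw [key]
  have : (0:ℝ) = ∫ _u : ℝ, (0:ℝ) := by simp
  rw [this]
  apply tendsto_integral_filter_of_dominated_convergence stdN
  · exact Eventually.of_forall fun t =>
      (stdN_cont.aestronglyMeasurable).indicator measurableSet_Iic
  · refine Eventually.of_forall fun t => ae_of_all _ fun u => ?_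
    calc ‖(Iic t).indicator stdN u‖ ≤ ‖stdN u‖ := norm_indicator_le_norm_self _ _
    _ = stdN u := by rw [Real.norm_eq_abs, abs_of_nonneg (stdN_nonneg u)]
  · exact stdN_integrable
  · refine ae_of_all _ fun u => ?_
    apply Tendsto.congr' _ tendsto_const_nhds
    filter_upwards [eventually_lt_atBot u] with t ht
    exact (Set.indicator_of_notMem (by simpa using ht.not_ge) _).symm
/-- Closed form of the Expected Improvement: with φ, Φ the standard normal pdf and cdf and
z = (f_min - μ)/σ,
∫_{-∞}^{f_min} (f_min - f)·(1/√(2πσ²)) e^{-(f-μ)²/(2σ²)} df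
  = (f_min - μ)Φ(z) + σφ(z) = σ(zΦ(z) + φ(z)). -/
theorem expected_improvement_closed_form (fmin μ σ : ℝ) (hσ : 0 < σ)
    (φ : ℝ → ℝ) (hφ : ∀ x, φ x = (1 / Real.sqrt (2 * π)) * Real.exp (-x ^ 2 / 2))
    (Φ : ℝ → ℝ) (hΦ : ∀ x, Φ x = ∫ u in Set.Iic x, φ u)
    (z : ℝ) (hz : z = (fmin - μ) / σ) :
    (∫ f in Set.Iio fmin,
        (fmin - f) * ((1 / Real.sqrt (2 * π * σ ^ 2)) * Real.exp (-(f - μ) ^ 2 / (2 * σ ^ 2))))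
      = (fmin - μ) * Φ z + σ * φ z ∧
    (fmin - μ) * Φ z + σ * φ z = σ * (z * Φ z + φ z) := by
  have hσ' : σ ≠ 0 := hσ.ne'
  have hφf : φ = stdN := funext fun x => by rw [hφ]; rfl
  have hΦf : ∀ x, Φ x = ∫ u in Set.Iic x, stdN u := fun x => by rw [hΦ, hφf]
  subst hφf hz
  constructor
  · -- main integral identity
    set F' : ℝ → ℝ := fun f =>
      (fmin - f) * ((1 / Real.sqrt (2 * π * σ ^ 2)) * Real.exp (-(f - μ) ^ 2 / (2 * σ ^ 2)))
      with hF'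
    set g : ℝ → ℝ := fun f =>
      (fmin - μ) * (∫ u in Set.Iic ((f - μ) / σ), stdN u) + σ * stdN ((f - μ) / σ) with hg
    have hsqrt : Real.sqrt (2 * π * σ ^ 2) = Real.sqrt (2 * π) * σ := by
      rw [Real.sqrt_mul (by positivity), Real.sqrt_sq hσ.le]
    have hderiv : ∀ f : ℝ, HasDerivAt g (F' f) f := by
      intro f
      have hu : HasDerivAt (fun f : ℝ => (f - μ) / σ) (1 / σ) f := by
        simpa using ((hasDerivAt_id f).sub_const μ).div_const σ
      have h1 := (stdC_hasDerivAt ((f - μ) / σ)).comp f hu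
      have h2 := (stdN_hasDerivAt ((f - μ) / σ)).comp f hu
      have h3 := (h1.const_mul (fmin - μ)).add (h2.const_mul σ)
      refine h3.congr_deriv ?_
      have hexp : Real.exp (-(f - μ) ^ 2 / (2 * σ ^ 2))
          = Real.exp (-((f - μ) / σ) ^ 2 / 2) := by
        rw [div_pow]
        congr 1
        ring
      rw [hF']
      simp only [stdN, hexp, hsqrt, Function.comp]
      have hs : Real.sqrt (2 * π) ≠ 0 := by positivity
      field_simp
      ring
    have hint : Integrable F' := by
      have hb : (0:ℝ) < 1 / (2 * σ ^ 2) := by positivity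
      have h1 : Integrable (fun x : ℝ => x * Real.exp (-(1 / (2 * σ ^ 2)) * x ^ 2)) :=
        integrable_mul_exp_neg_mul_sq hb
      have h2 : Integrable (fun x : ℝ => Real.exp (-(1 / (2 * σ ^ 2)) * x ^ 2)) :=
        integrable_exp_neg_mul_sq hb
      have h3 : Integrable (fun x : ℝ =>
          (1 / Real.sqrt (2 * π * σ ^ 2)) *
            ((fmin - μ) * Real.exp (-(1 / (2 * σ ^ 2)) * x ^ 2)
              - x * Real.exp (-(1 / (2 * σ ^ 2)) * x ^ 2))) :=
        ((h2.const_mul (fmin - μ)).sub h1).const_mul _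
      have h4 := h3.comp_sub_right μ
      refine h4.congr (ae_of_all _ fun f => ?_)
      have hexp : Real.exp (-(1 / (2 * σ ^ 2)) * (f - μ) ^ 2)
          = Real.exp (-(f - μ) ^ 2 / (2 * σ ^ 2)) := by
        congr 1; ring
      simp only [hF', hexp]
      ring
    have htend : Tendsto g atBot (𝓝 0) := by
      have hcomp : Tendsto (fun f : ℝ => (f - μ) / σ) atBot atBot := by
        apply Tendsto.atBot_div_const hσ
        simpa [sub_eq_add_neg] using tendsto_atBot_add_const_right atBot (-μ) tendsto_id
      have t1 := (stdC_tendsto_atBot.comp hcomp).const_mul (fmin - μ)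
      have t2 := (stdN_tendsto_atBot.comp hcomp).const_mul σ
      have := t1.add t2
      simpa [Function.comp] using this
    have key := integral_Iic_of_hasDerivAt_of_tendsto' (a := fmin)
      (fun x _ => hderiv x) hint.integrableOn htend
    rw [← MeasureTheory.integral_Iic_eq_integral_Iio]
    rw [show (∫ f in Set.Iic fmin,
        (fmin - f) * ((1 / Real.sqrt (2 * π * σ ^ 2)) * Real.exp (-(f - μ) ^ 2 / (2 * σ ^ 2))))
      = ∫ x in Set.Iic fmin, F' x from rfl, key, hg, hΦf]
    ring
  · rw [hΦf]
    field_simp
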